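/- Let P be a d-dimensional simplicial reflexive polytope with centrally symmetric facets F, −F and vertices of F equal to e_1, …, e_d. Then 2M ⊆ ℤe_1 + ⋯ + ℤe_d ⊆ M, i.e., the sublattice generated by the vertices of F has index dividing 2^d and contains 2M. -/

import Mathlib

open Pointwise Matrix

/-- Ambient space `ℝ^d`. -/
abbrev E (d : ℕ) := Fin d → ℝ

/-- A point of the lattice `M ≅ ℤ^d`. -/
def IsLatticePt {d : ℕ} (x : E d) : Prop := ∀ i, ∃ n : ℤ, x i = (n : ℝ)

/-- The standard pairing between `N_ℝ` and `M_ℝ`. -/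
def dot {d : ℕ} (x y : E d) : ℝ := ∑ i, x i * y i

/-- The dual (polar) polytope `P* = {x : ⟨x,y⟩ ≥ -1 ∀ y ∈ P}`. -/
def polarDual {d : ℕ} (P : Set (E d)) : Set (E d) := {x | ∀ y ∈ P, -1 ≤ dot x y}

/-- A lattice polytope: convex hull of finitely many lattice points. -/
def IsLatticePolytope {d : ℕ} (P : Set (E d)) : Prop :=
  ∃ S : Finset (E d), (∀ x ∈ S, IsLatticePt x) ∧ P = convexHull ℝ (S : Set (E d))

/-- A reflexive polytope: a lattice polytope with `0` in its interior whose polar dual is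
again a lattice polytope (i.e. the hull of its lattice points). -/
def IsReflexive {d : ℕ} (P : Set (E d)) : Prop :=
  IsLatticePolytope P ∧ 0 ∈ interior P ∧
    polarDual P = convexHull ℝ {x | x ∈ polarDual P ∧ IsLatticePt x}

/-- A facet: a nonempty exposed face of dimension `d - 1`. -/
def IsFacet {d : ℕ} (P F : Set (E d)) : Prop :=
  IsExposed ℝ P F ∧ F.Nonempty ∧
    Module.finrank ℝ (affineSpan ℝ F).direction = d - 1

/-- Simplicial polytope: every facet is a simplex (hull of `d` affinely independent points). -/
def IsSimplicial {d : ℕ} (P : Set (E d)) : Prop :=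
  ∀ F, IsFacet P F → ∃ v : Fin d → E d,
    AffineIndependent ℝ v ∧ F = convexHull ℝ (Set.range v)

/-- Pseudo-symmetric: some facet `F` has `-F` also a facet. -/
def IsPseudoSymmetric {d : ℕ} (P : Set (E d)) : Prop :=
  ∃ F, IsFacet P F ∧ IsFacet P (-F)

/-- Application of an integer matrix to a point of `ℝ^d`. -/
def applyU {d : ℕ} (U : Matrix (Fin d) (Fin d) ℤ) (x : E d) : E d :=
  (U.map (Int.cast : ℤ → ℝ)) *ᵥ x

/-- Wirth matrix: block form `[[2·Id_f, 0], [C, Id_{d-f}]]` with `C` a `{0,1}`-matrix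
each of whose columns has an odd number of `1`'s. -/
def IsWirth {d : ℕ} (A : Matrix (Fin d) (Fin d) ℤ) : Prop :=
  ∃ f : ℕ, f < d ∧
    (∀ i j : Fin d, (i : ℕ) < f → (j : ℕ) < f → A i j = if i = j then 2 else 0) ∧
    (∀ i j : Fin d, (i : ℕ) < f → f ≤ (j : ℕ) → A i j = 0) ∧
    (∀ i j : Fin d, f ≤ (i : ℕ) → (j : ℕ) < f → A i j = 0 ∨ A i j = 1) ∧
    (∀ i j : Fin d, f ≤ (i : ℕ) → f ≤ (j : ℕ) → A i j = if i = j then 1 else 0) ∧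
    (∀ j : Fin d, (j : ℕ) < f →
      Odd (Finset.univ.filter (fun i : Fin d => f ≤ (i : ℕ) ∧ A i j = 1)).card)

namespace TwoM
variable {d : ℕ}

/-- `dot w` as a linear map in the second argument. -/
def dotL (w : E d) : E d →ₗ[ℝ] ℝ where
  toFun := dot w
  map_add' x y := by simp [dot, mul_add, Finset.sum_add_distrib]
  map_smul' c x := by simp [dot, Finset.mul_sum, mul_left_comm]

@[simp] lemma dotL_apply (w x : E d) : dotL w x = dot w x := rfl

lemma dot_comm (x y : E d) : dot x y = dot y x := by
  simp [dot, mul_comm]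

lemma dot_add_left (x y z : E d) : dot (x + y) z = dot x z + dot y z := by
  simp [dot, add_mul, Finset.sum_add_distrib]

lemma dot_sub_left (x y z : E d) : dot (x - y) z = dot x z - dot y z := by
  simp [dot, sub_mul, Finset.sum_sub_distrib]

lemma dot_smul_left (c : ℝ) (x z : E d) : dot (c • x) z = c * dot x z := by
  simp [dot, Finset.mul_sum, mul_assoc]

lemma dot_self_eq_zero {x : E d} (h : dot x x = 0) : x = 0 := by
  have : ∀ i ∈ Finset.univ, x i * x i = 0 := by
    rw [← Finset.sum_eq_zero_iff_of_nonneg]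
    · exact h
    · intro i _; exact mul_self_nonneg _
  funext i
  have := this i (Finset.mem_univ i)
  simpa [mul_self_eq_zero] using this

lemma dot_int {a b : E d} (ha : IsLatticePt a) (hb : IsLatticePt b) :
    ∃ n : ℤ, dot a b = (n : ℝ) := by
  choose n hn using ha
  choose m hm using hb
  refine ⟨∑ i, n i * m i, ?_⟩
  rw [dot]
  push_cast
  exact Finset.sum_congr rfl fun i _ => by rw [hn i, hm i]

/-- Face lemma: if a linear functional is minimized at `c` on `T` and `x ∈ conv T`
attains `c`, then `x` is in the hull of the minimizers. -/
lemma face_lemma (T : Set (E d)) (f : E d →ₗ[ℝ] ℝ) (c : ℝ)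
    (hT : ∀ p ∈ T, c ≤ f p) {x : E d} (hx : x ∈ convexHull ℝ T) (hxc : f x = c) :
    x ∈ convexHull ℝ (T ∩ {y | f y = c}) := by
  rw [convexHull_eq] at hx
  obtain ⟨ι, t, w, z, hw0, hw1, hzT, hcm⟩ := hx
  have hxe : x = ∑ i ∈ t, w i • z i := by
    rw [← hcm, Finset.centerMass_eq_of_sum_1 _ _ hw1]
  have hfx : ∑ i ∈ t, w i * (f (z i) - c) = 0 := by
    have : f x = ∑ i ∈ t, w i * f (z i) := by
      rw [hxe, map_sum]; simp [mul_comm]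
    simp only [mul_sub, Finset.sum_sub_distrib, ← Finset.sum_mul, hw1, one_mul, ← this, hxc,
      sub_self]
  have hall : ∀ i ∈ t, w i * (f (z i) - c) = 0 := by
    rw [← Finset.sum_eq_zero_iff_of_nonneg]
    · exact hfx
    · intro i hi
      exact mul_nonneg (hw0 i hi) (sub_nonneg.2 (hT _ (hzT i hi)))
  have hcm' : ({i ∈ t | w i ≠ 0}).centerMass w z = x := by
    rw [Finset.centerMass_filter_ne_zero]; exact hcm
  rw [← hcm']
  refine Finset.centerMass_mem_convexHull _ (fun i hi => hw0 i (Finset.mem_filter.1 hi).1) ?_ ?_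
  · have : ∑ i ∈ {i ∈ t | w i ≠ 0}, w i = 1 := by
      rw [Finset.sum_filter_ne_zero]; exact hw1
    rw [this]; norm_num
  · intro i hi
    obtain ⟨hit, hwi⟩ := Finset.mem_filter.1 hi
    refine ⟨hzT i hit, ?_⟩
    have := hall i hit
    rcases mul_eq_zero.1 this with h | h
    · exact absurd h hwi
    · exact (sub_eq_zero.1 h)

end TwoM

namespace TwoM
variable {d : ℕ} {e : Fin d → E d}

lemma dot_neg_left (x z : E d) : dot (-x) z = -dot x z := by
  simp [dot]

lemma dot_sum_left {ι : Type*} (s : Finset ι) (v : ι → E d) (z : E d) :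
    dot (∑ i ∈ s, v i) z = ∑ i ∈ s, dot (v i) z := by
  simp only [dot, Finset.sum_apply, Finset.sum_mul]
  rw [Finset.sum_comm]

noncomputable def bas (hd : 0 < d) (he : LinearIndependent ℝ e) : Module.Basis (Fin d) ℝ (E d) :=
  haveI : Nonempty (Fin d) := ⟨⟨0, hd⟩⟩
  basisOfLinearIndependentOfCardEqFinrank he (by simp)

lemma bas_coe (hd : 0 < d) (he : LinearIndependent ℝ e) : ⇑(bas hd he) = e := by
  haveI : Nonempty (Fin d) := ⟨⟨0, hd⟩⟩
  exact coe_basisOfLinearIndependentOfCardEqFinrank _ _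

noncomputable def eps (hd : 0 < d) (he : LinearIndependent ℝ e) (j : Fin d) : E d :=
  fun k => (bas hd he).coord j (fun m => if k = m then 1 else 0)

lemma dot_eps (hd : 0 < d) (he : LinearIndependent ℝ e) (j : Fin d) (y : E d) :
    dot (eps hd he j) y = (bas hd he).coord j y := by
  conv_rhs => rw [pi_eq_sum_univ y, map_sum]
  simp [eps, dot, mul_comm]

lemma dot_eps_basis (hd : 0 < d) (he : LinearIndependent ℝ e) (j i : Fin d) :
    dot (eps hd he j) (e i) = if i = j then 1 else 0 := by
  rw [dot_eps]
  have : e i = bas hd he i := by rw [bas_coe]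
  rw [this, Module.Basis.coord_apply, Module.Basis.repr_self, Finsupp.single_apply]

lemma eq_of_dot_eps (hd : 0 < d) (he : LinearIndependent ℝ e) {w v : E d}
    (h : ∀ j, dot (eps hd he j) w = dot (eps hd he j) v) : w = v := by
  have hr : ∀ j, (bas hd he).repr w j = (bas hd he).repr v j := by
    intro j
    have := h j
    rwa [dot_eps, dot_eps, Module.Basis.coord_apply, Module.Basis.coord_apply] at this
  calc w = ∑ j, (bas hd he).repr w j • bas hd he j := ((bas hd he).sum_repr w).symm
    _ = ∑ j, (bas hd he).repr v j • bas hd he j := by simp_rw [hr]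
    _ = v := (bas hd he).sum_repr v

/-- If `y` is in the hull of `W ⊆ {x}` then `x ∈ W`. -/
lemma mem_of_hull_subset_singleton {W : Set (E d)} {x : E d}
    (hx : x ∈ convexHull ℝ W) (hW : W ⊆ {x}) : x ∈ W := by
  obtain ⟨q, hq⟩ := convexHull_nonempty_iff.1 ⟨x, hx⟩
  have := hW hq
  rw [Set.mem_singleton_iff] at this
  rwa [← this]

end TwoM

namespace TwoM
variable {d : ℕ} {e : Fin d → E d}

lemma eq_of_dot_basis (hd : 0 < d) (he : LinearIndependent ℝ e) {w v : E d}
    (h : ∀ j, dot w (e j) = dot v (e j)) : w = v := by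
  have hj : ∀ j, dot (w - v) (e j) = 0 := fun j => by
    rw [dot_sub_left, h j, sub_self]
  have hz : ∀ y, dot (w - v) y = 0 := by
    intro y
    calc dot (w - v) y = dotL (w - v) y := rfl
      _ = dotL (w - v) (∑ j, (bas hd he).repr y j • bas hd he j) := by
          rw [Module.Basis.sum_repr]
      _ = ∑ j, (bas hd he).repr y j * dot (w - v) (e j) := by
          rw [map_sum]
          refine Finset.sum_congr rfl fun j _ => ?_
          rw [LinearMap.map_smul, smul_eq_mul, dotL_apply]
          rw [show bas hd he j = e j from congrFun (bas_coe hd he) j]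
      _ = 0 := by simp [hj]
  have := dot_self_eq_zero (hz (w - v))
  exact sub_eq_zero.1 this

end TwoM


open TwoM in
theorem two_M_sub_vertex_lattice (d : ℕ) (P F : Set (E d)) (e : Fin d → E d)
    (hP : IsReflexive P) (hsimp : IsSimplicial P)
    (hF : IsFacet P F) (hFneg : IsFacet P (-F))
    (he : LinearIndependent ℝ e) (hFe : F = convexHull ℝ (Set.range e)) :
    (∀ i, IsLatticePt (e i)) ∧
    ∀ x : E d, IsLatticePt x → ∃ c : Fin d → ℤ,
      (2 : ℝ) • x = ∑ i, (c i : ℝ) • e i := by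
  classical
  rcases Nat.eq_zero_or_pos d with hd0 | hd
  · subst hd0
    exact ⟨fun i => i.elim0, fun x hx => ⟨fun i => i.elim0, funext fun k => k.elim0⟩⟩
  obtain ⟨⟨S, hSlat, hSP⟩, h0P, hdual⟩ := hP
  set T : Set (E d) := {x | x ∈ polarDual P ∧ IsLatticePt x} with hTdef
  have h0 : (0 : E d) ∈ P := interior_subset h0P
  have hFP : F ⊆ P := hF.1.subset
  have heF : ∀ i, e i ∈ F := fun i => by
    rw [hFe]; exact subset_convexHull ℝ _ ⟨i, rfl⟩
  have heP : ∀ i, e i ∈ P := fun i => hFP (heF i)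
  have hnegP : ∀ i, -e i ∈ P := fun i => hFneg.1.subset (by
    rw [Set.mem_neg, neg_neg]; exact heF i)
  set ε : Fin d → E d := eps hd he with hεdef
  have hεe : ∀ j i, dot (ε j) (e i) = if i = j then 1 else 0 := dot_eps_basis hd he
  set u : E d := -∑ j, ε j with hudef
  have hue : ∀ i, dot u (e i) = -1 := by
    intro i
    rw [hudef, dot_neg_left, dot_sum_left]
    simp [hεe]
  have hequ : ∀ {q : E d}, (∀ j, dot q (e j) = -1) → q = u := fun {q} hq =>
    eq_of_dot_basis hd he fun j => by rw [hq j, hue j]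
  obtain ⟨l, hlF⟩ := hF.1 hF.2.1
  have hFmem : ∀ y, y ∈ F ↔ y ∈ P ∧ ∀ z ∈ P, l z ≤ l y := fun y => by
    rw [hlF]; exact Iff.rfl
  set i0 : Fin d := ⟨0, hd⟩
  set m : ℝ := l (e i0) with hmdef
  have hlP : ∀ y ∈ P, l y ≤ m := fun y hy => ((hFmem (e i0)).1 (heF i0)).2 y hy
  have hle : ∀ i, l (e i) = m := fun i =>
    le_antisymm (hlP _ (heP i)) (((hFmem (e i)).1 (heF i)).2 _ (heP i0))
  have hlid : ∀ y, l y = -m * dot u y := by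
    have hmapeq : (↑l : E d →ₗ[ℝ] ℝ) = (-m) • dotL u := by
      refine (bas hd he).ext fun i => ?_
      rw [show bas hd he i = e i from congrFun (bas_coe hd he) i]
      simp only [ContinuousLinearMap.coe_coe, LinearMap.smul_apply, dotL_apply, smul_eq_mul]
      rw [hle i, hue i]; ring
    intro y
    have := LinearMap.congr_fun hmapeq y
    simpa using this
  have hFdot : ∀ y ∈ F, dot u y = -1 := by
    intro y hy
    have hsub : convexHull ℝ (Set.range e) ⊆ {w | dot u w = -1} := by
      apply convexHull_min
      · rintro _ ⟨i, rfl⟩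
        show dot u (e i) = -1
        exact hue i
      · exact convex_hyperplane ⟨(dotL u).map_add, (dotL u).map_smul⟩ (-1)
    rw [hFe] at hy
    exact hsub hy
  have h0le : (0:ℝ) ≤ m := by
    have := hlP 0 h0
    rwa [map_zero] at this
  have hmne : m ≠ 0 := by
    intro hm
    have h0F : (0 : E d) ∈ F := (hFmem 0).2 ⟨h0, fun z hz => by
      rw [hlid z, hlid 0, hm]; simp⟩
    have := hFdot 0 h0F
    rw [show dot u 0 = 0 from (dotL u).map_zero] at this
    norm_num at this
  have hm0 : (0:ℝ) < m := lt_of_le_of_ne h0le (Ne.symm hmne)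
  have hPu : ∀ y ∈ P, -1 ≤ dot u y := by
    intro y hy
    have := hlP y hy
    rw [hlid y] at this
    nlinarith
  have huP : u ∈ polarDual P := fun y hy => hPu y hy
  have hFback : ∀ y ∈ P, dot u y = -1 → y ∈ F := by
    intro y hy hdy
    refine (hFmem y).2 ⟨hy, fun z hz => ?_⟩
    have hym : l y = m := by rw [hlid y, hdy]; ring
    rw [hym]; exact hlP z hz
  have hεF0 : ∀ j, ∀ y ∈ F, 0 ≤ dot (ε j) y := by
    intro j y hy
    have hsub : convexHull ℝ (Set.range e) ⊆ {w | 0 ≤ dot (ε j) w} := by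
      apply convexHull_min
      · rintro _ ⟨i, rfl⟩
        show 0 ≤ dot (ε j) (e i)
        rw [hεe j i]; split <;> norm_num
      · exact convex_halfSpace_ge ⟨(dotL (ε j)).map_add, (dotL (ε j)).map_smul⟩ 0
    rw [hFe] at hy
    exact hsub hy
  have hεF1 : ∀ j, ∀ y ∈ F, dot (ε j) y ≤ 1 := by
    intro j y hy
    have hsub : convexHull ℝ (Set.range e) ⊆ {w | dot (ε j) w ≤ 1} := by
      apply convexHull_min
      · rintro _ ⟨i, rfl⟩
        show dot (ε j) (e i) ≤ 1
        rw [hεe j i]; split <;> norm_num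
      · exact convex_halfSpace_le ⟨(dotL (ε j)).map_add, (dotL (ε j)).map_smul⟩ 1
    rw [hFe] at hy
    exact hsub hy
  -- Step B : u is a lattice point
  have hdne : (d:ℝ) ≠ 0 := Nat.cast_ne_zero.2 hd.ne'
  set b0 : E d := Finset.univ.centerMass (fun _ => (1:ℝ)) e with hb0def
  have hb0F : b0 ∈ F := by
    rw [hFe, hb0def]
    refine Finset.centerMass_mem_convexHull _ (fun i _ => zero_le_one) ?_ (fun i _ => ⟨i, rfl⟩)
    rw [Finset.sum_const, nsmul_eq_mul, mul_one, Finset.card_univ, Fintype.card_fin]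
    exact_mod_cast hd
  have hdotb0 : ∀ q : E d, dot q b0 = (d:ℝ)⁻¹ * ∑ j, dot q (e j) := by
    intro q
    show dotL q b0 = _
    rw [hb0def, Finset.centerMass, LinearMap.map_smul, map_sum]
    simp [Finset.card_univ]
  have hub0 : dot u b0 = -1 := by
    rw [hdotb0]
    simp only [hue]
    rw [Finset.sum_const, Finset.card_univ, Fintype.card_fin, nsmul_eq_mul]
    field_simp
  have hmem_u : u ∈ convexHull ℝ T := by rw [← hdual]; exact huP
  have hkeyB := face_lemma T (dotL b0) (-1)
    (fun p hp => by rw [dotL_apply, dot_comm]; exact hp.1 b0 (hFP hb0F)) hmem_u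
    (by rw [dotL_apply, dot_comm, hub0])
  have hsumq : ∀ q, q ∈ polarDual P → dot q b0 = -1 → ∀ j, dot q (e j) = -1 := by
    intro q hq hqb
    have h1 : (d:ℝ)⁻¹ * ∑ j, dot q (e j) = -1 := by rw [← hdotb0]; exact hqb
    have h2 : ∑ j, dot q (e j) = -(d:ℝ) := by
      field_simp at h1
      linarith
    have hsum0 : ∑ j, (dot q (e j) + 1) = 0 := by
      rw [Finset.sum_add_distrib, h2, Finset.sum_const, Finset.card_univ, Fintype.card_fin,
        nsmul_eq_mul, mul_one]
      ring
    have hall := (Finset.sum_eq_zero_iff_of_nonneg (fun j _ => by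
      have := hq (e j) (heP j); linarith)).1 hsum0
    intro j
    have := hall j (Finset.mem_univ j)
    linarith
  have hWu : T ∩ {w | dotL b0 w = -1} ⊆ {u} := by
    rintro q ⟨hqT, hqb⟩
    exact Set.mem_singleton_iff.2 (hequ (hsumq q hqT.1 (by rw [dot_comm]; exact hqb)))
  have hulat : IsLatticePt u := (mem_of_hull_subset_singleton hkeyB hWu).1.2
  -- Step C : the vertices are lattice points
  have hSsub : (S : Set (E d)) ⊆ P := by rw [hSP]; exact subset_convexHull ℝ _
  have helat : ∀ i, IsLatticePt (e i) := by
    intro i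
    have hstep1 := face_lemma (S : Set (E d)) (-(↑l : E d →ₗ[ℝ] ℝ)) (-m)
      (fun p hp => by
        simp only [LinearMap.neg_apply, ContinuousLinearMap.coe_coe, neg_le_neg_iff]
        exact hlP p (hSsub hp))
      (by rw [← hSP]; exact heP i)
      (by simp only [LinearMap.neg_apply, ContinuousLinearMap.coe_coe, neg_inj]; exact hle i)
    have hW1F : (S : Set (E d)) ∩ {w | (-(↑l : E d →ₗ[ℝ] ℝ)) w = -m} ⊆ F := by
      rintro p ⟨hpS, hpl⟩
      simp only [Set.mem_setOf_eq, LinearMap.neg_apply, ContinuousLinearMap.coe_coe,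
        neg_inj] at hpl
      refine (hFmem p).2 ⟨hSsub hpS, fun z hz => ?_⟩
      rw [hpl]; exact hlP z hz
    have hstep2 := face_lemma _ (-(dotL (ε i))) (-1)
      (fun p hp => by
        simp only [LinearMap.neg_apply, dotL_apply, neg_le_neg_iff]
        exact hεF1 i p (hW1F hp))
      hstep1
      (by simp only [LinearMap.neg_apply, dotL_apply, neg_inj]; rw [hεe i i]; simp)
    have hW2 : ((S : Set (E d)) ∩ {w | (-(↑l : E d →ₗ[ℝ] ℝ)) w = -m}) ∩
        {w | (-(dotL (ε i))) w = -1} ⊆ {e i} := by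
      rintro p ⟨hpW1, hpε⟩
      have hpF : p ∈ F := hW1F hpW1
      have hpε1 : dot (ε i) p = 1 := by
        simpa only [Set.mem_setOf_eq, LinearMap.neg_apply, dotL_apply, neg_inj] using hpε
      have hSig : ∑ j, dot (ε j) p = 1 := by
        have := hFdot p hpF
        rw [hudef, dot_neg_left, dot_sum_left] at this
        linarith
      have hadd := Finset.add_sum_erase Finset.univ (fun j => dot (ε j) p) (Finset.mem_univ i)
      have hz : ∀ j ∈ Finset.univ.erase i, dot (ε j) p = 0 := by
        apply (Finset.sum_eq_zero_iff_of_nonneg (fun j _ => hεF0 j p hpF)).1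
        linarith
      have hpe : p = e i := by
        refine eq_of_dot_eps hd he (fun j => ?_)
        show dot (ε j) p = dot (ε j) (e i)
        rw [hεe j i]
        by_cases hji : j = i
        · subst hji; rw [hpε1, if_pos rfl]
        · rw [hz j (Finset.mem_erase.2 ⟨hji, Finset.mem_univ j⟩),
            if_neg (fun h => hji h.symm)]
      exact Set.mem_singleton_iff.2 hpe
    have := mem_of_hull_subset_singleton hstep2 hW2
    exact hSlat _ this.1.1
  -- Step D : for each i, a lattice vector g with dot g (e j) = 2·δ_{ij}
  have hg : ∀ i, ∃ g : E d, IsLatticePt g ∧ ∀ j, dot g (e j) = if j = i then 2 else 0 := by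
    intro i
    rcases Nat.lt_or_ge d 2 with hd1 | hd2
    · -- d = 1
      have hd1' : d = 1 := by omega
      refine ⟨(-2:ℝ) • u, ?_, ?_⟩
      · intro k
        obtain ⟨b, hb⟩ := hulat k
        exact ⟨-2*b, by rw [Pi.smul_apply, smul_eq_mul, hb]; push_cast; ring⟩
      · intro j
        have hji : j = i := by
          subst hd1'
          exact Subsingleton.elim j i
        rw [dot_smul_left, hue j, if_pos hji]
        ring
    · -- d ≥ 2
      set S' := S.filter (fun p => dot u p ≠ -1) with hS'def
      have hS'ne : S'.Nonempty := by
        by_contra hne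
        rw [Finset.not_nonempty_iff_eq_empty] at hne
        have hall : ∀ p ∈ S, dot u p = -1 := by
          intro p hp
          by_contra hc
          have hmem : p ∈ S' := Finset.mem_filter.2 ⟨hp, hc⟩
          rw [hne] at hmem
          exact absurd hmem (Finset.notMem_empty p)
        have hPsub : P ⊆ {w | dot u w = -1} := by
          rw [hSP]
          apply convexHull_min
          · intro p hp
            show dot u p = -1
            exact hall p (Finset.mem_coe.1 hp)
          · exact convex_hyperplane ⟨(dotL u).map_add, (dotL u).map_smul⟩ (-1)
        have := hPsub h0
        rw [Set.mem_setOf_eq, show dot u 0 = 0 from (dotL u).map_zero] at this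
        norm_num at this
      set t : ℝ := S'.inf' hS'ne (fun p => (dot u p + 1) / (1 + |dot (ε i) p|)) with htdef
      have htpos : 0 < t := by
        rw [htdef, Finset.lt_inf'_iff]
        intro p hp
        obtain ⟨hpS, hpne⟩ := Finset.mem_filter.1 hp
        have h1 : -1 ≤ dot u p := hPu p (hSsub hpS)
        have h2 : 0 < dot u p + 1 := by
          rcases lt_or_eq_of_le h1 with h | h
          · linarith
          · exact absurd h.symm hpne
        have h3 : 0 < 1 + |dot (ε i) p| := by positivity
        positivity
      have htle : ∀ p ∈ S', t * (1 + |dot (ε i) p|) ≤ dot u p + 1 := by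
        intro p hp
        have h3 : 0 < 1 + |dot (ε i) p| := by positivity
        have hinf : t ≤ (dot u p + 1) / (1 + |dot (ε i) p|) :=
          Finset.inf'_le _ hp
        rw [le_div_iff₀ h3] at hinf
        exact hinf
      set w' : E d := u + t • ε i with hw'def
      have hw'e : ∀ j, dot w' (e j) = -1 + t * (if j = i then 1 else 0) := by
        intro j
        rw [hw'def, dot_add_left, dot_smul_left, hue j, hεe i j]
      have hw'P : w' ∈ polarDual P := by
        intro y hy
        rw [hSP] at hy
        have hsub : convexHull ℝ (S : Set (E d)) ⊆ {w | -1 ≤ dot w' w} := by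
          apply convexHull_min
          · intro p hpS
            show -1 ≤ dot w' p
            rw [hw'def, dot_add_left, dot_smul_left]
            by_cases hcase : dot u p = -1
            · have hpF : p ∈ F := hFback p (hSsub hpS) hcase
              have h5 := mul_nonneg htpos.le (hεF0 i p hpF)
              rw [hcase]
              linarith
            · have hp' : p ∈ S' := Finset.mem_filter.2 ⟨Finset.mem_coe.1 hpS, hcase⟩
              have h4 := htle p hp'
              have h5 : t * (-|dot (ε i) p|) ≤ t * dot (ε i) p :=
                mul_le_mul_of_nonneg_left (neg_abs_le _) htpos.le
              nlinarith [htpos, abs_nonneg (dot (ε i) p)]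
          · exact convex_halfSpace_ge ⟨(dotL w').map_add, (dotL w').map_smul⟩ (-1)
        exact hsub hy
      set Er := Finset.univ.erase i with hErdef
      have hErcardpos : 0 < (Er.card : ℝ) := by
        rw [hErdef, Finset.card_erase_of_mem (Finset.mem_univ i), Finset.card_univ,
          Fintype.card_fin]
        have : 0 < d - 1 := by omega
        exact_mod_cast this
      have hErne : (Er.card : ℝ) ≠ 0 := ne_of_gt hErcardpos
      set bi : E d := Er.centerMass (fun _ => (1:ℝ)) e with hbidef
      have hbiF : bi ∈ F := by
        rw [hFe, hbidef]
        refine Finset.centerMass_mem_convexHull _ (fun j _ => zero_le_one) ?_ (fun j _ => ⟨j, rfl⟩)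
        rw [Finset.sum_const, nsmul_eq_mul, mul_one]
        exact hErcardpos
      have hdotbi : ∀ q : E d, dot q bi = (Er.card : ℝ)⁻¹ * ∑ j ∈ Er, dot q (e j) := by
        intro q
        show dotL q bi = _
        rw [hbidef, Finset.centerMass, LinearMap.map_smul, map_sum]
        simp
      have hw'bi : dot w' bi = -1 := by
        rw [hdotbi]
        have hterm : ∀ j ∈ Er, dot w' (e j) = -1 := by
          intro j hj
          rw [hw'e j, if_neg (Finset.mem_erase.1 hj).1]
          ring
        rw [Finset.sum_congr rfl hterm, Finset.sum_const, nsmul_eq_mul]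
        field_simp
      have hmemw' : w' ∈ convexHull ℝ T := by rw [← hdual]; exact hw'P
      have hkeyD := face_lemma T (dotL bi) (-1)
        (fun p hp => by rw [dotL_apply, dot_comm]; exact hp.1 bi (hFP hbiF)) hmemw'
        (by rw [dotL_apply, dot_comm]; exact hw'bi)
      have hrid : ∀ q, q ∈ T → dotL bi q = -1 → ∀ j ∈ Er, dot q (e j) = -1 := by
        intro q hqT hqb j hj
        have hq1 : dot q bi = -1 := by rw [dot_comm]; exact hqb
        rw [hdotbi] at hq1
        have hsum : ∑ k ∈ Er, dot q (e k) = -(Er.card : ℝ) := by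
          field_simp at hq1
          linarith
        have hsum0 : ∑ k ∈ Er, (dot q (e k) + 1) = 0 := by
          rw [Finset.sum_add_distrib, hsum, Finset.sum_const, nsmul_eq_mul, mul_one]
          ring
        have hz := (Finset.sum_eq_zero_iff_of_nonneg (fun k _ => by
          have := hqT.1 (e k) (heP k); linarith)).1 hsum0 j hj
        linarith
      by_cases hex : ∃ q ∈ T ∩ {w | dotL bi w = -1}, dot q (e i) ≠ -1
      · obtain ⟨q, hqmem, hqne⟩ := hex
        obtain ⟨hqT, hqb⟩ := hqmem
        have hqlat : IsLatticePt q := hqT.2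
        obtain ⟨n, hn⟩ := dot_int hqlat (helat i)
        have hn1 : -1 ≤ dot q (e i) := hqT.1 (e i) (heP i)
        have hn2 : dot q (e i) ≤ 1 := by
          have hq2 := hqT.1 (-e i) (hnegP i)
          have hneg : dot q (-e i) = -dot q (e i) := (dotL q).map_neg (e i)
          linarith
        have hnint : n = 0 ∨ n = 1 := by
          have b1 : (-1:ℝ) ≤ (n:ℝ) := by rw [← hn]; exact hn1
          have b2 : (n:ℝ) ≤ 1 := by rw [← hn]; exact hn2
          have b3 : (n:ℝ) ≠ -1 := by rw [← hn]; exact hqne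
          have i1 : (-1:ℤ) ≤ n := by exact_mod_cast b1
          have i2 : n ≤ 1 := by exact_mod_cast b2
          have i3 : n ≠ -1 := by
            intro h
            apply b3
            rw [h]
            push_cast
            ring
          omega
        have hqej : ∀ j, j ≠ i → dot q (e j) = -1 := fun j hj =>
          hrid q hqT hqb j (Finset.mem_erase.2 ⟨hj, Finset.mem_univ j⟩)
        rcases hnint with h0' | h1'
        · refine ⟨(2:ℝ) • (q - u), ?_, ?_⟩
          · intro k
            obtain ⟨a, ha⟩ := hqlat k
            obtain ⟨b, hb⟩ := hulat k
            refine ⟨2*(a-b), ?_⟩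
            rw [Pi.smul_apply, Pi.sub_apply, smul_eq_mul, ha, hb]
            push_cast
            ring
          · intro j
            rw [dot_smul_left, dot_sub_left]
            by_cases hji : j = i
            · subst hji
              rw [hn, h0', hue j, if_pos rfl]
              norm_num
            · rw [hqej j hji, hue j, if_neg hji]
              ring
        · refine ⟨q - u, ?_, ?_⟩
          · intro k
            obtain ⟨a, ha⟩ := hqlat k
            obtain ⟨b, hb⟩ := hulat k
            refine ⟨a-b, ?_⟩
            rw [Pi.sub_apply, ha, hb]
            push_cast
            ring
          · intro j
            rw [dot_sub_left]
            by_cases hji : j = i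
            · subst hji
              rw [hn, h1', hue j, if_pos rfl]
              norm_num
            · rw [hqej j hji, hue j, if_neg hji]
              ring
      · exfalso
        push_neg at hex
        have hsub : T ∩ {w | dotL bi w = -1} ⊆ {u} := by
          rintro q ⟨hqT, hqb⟩
          refine Set.mem_singleton_iff.2 (hequ fun j => ?_)
          by_cases hji : j = i
          · subst hji
            exact hex q ⟨hqT, hqb⟩
          · exact hrid q hqT hqb j (Finset.mem_erase.2 ⟨hji, Finset.mem_univ j⟩)
        have hwu : w' = u := by
          have := (convexHull_mono hsub) hkeyD
          rwa [convexHull_singleton, Set.mem_singleton_iff] at this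
        have hcontra : dot w' (e i) = dot u (e i) := by rw [hwu]
        rw [hw'e i, if_pos rfl, hue i] at hcontra
        linarith
  -- Conclusion
  refine ⟨helat, ?_⟩
  intro x hx
  choose g hg1 hg2 using hg
  choose n hn using fun i => dot_int (hg1 i) hx
  refine ⟨n, ?_⟩
  have hrepr : ∀ i, (n i : ℝ) = 2 * (bas hd he).repr x i := by
    intro i
    rw [← hn i]
    calc dot (g i) x = dotL (g i) x := rfl
      _ = dotL (g i) (∑ j, (bas hd he).repr x j • bas hd he j) := by rw [Module.Basis.sum_repr]
      _ = ∑ j, (bas hd he).repr x j * dot (g i) (e j) := by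
          rw [map_sum]
          refine Finset.sum_congr rfl fun j _ => ?_
          rw [LinearMap.map_smul, smul_eq_mul, dotL_apply,
            show bas hd he j = e j from congrFun (bas_coe hd he) j]
      _ = 2 * (bas hd he).repr x i := by
          simp only [hg2 i, mul_ite, mul_zero, mul_one]
          rw [Finset.sum_ite_eq' Finset.univ i (fun j => (bas hd he).repr x j * 2)]
          simp [mul_comm]
  calc (2:ℝ) • x = (2:ℝ) • ∑ j, (bas hd he).repr x j • bas hd he j := by
        rw [Module.Basis.sum_repr]
    _ = ∑ j, (2 * (bas hd he).repr x j) • e j := by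
        rw [Finset.smul_sum]
        refine Finset.sum_congr rfl fun j _ => ?_
        rw [smul_smul, show bas hd he j = e j from congrFun (bas_coe hd he) j]
    _ = ∑ j, (n j : ℝ) • e j := by
        refine Finset.sum_congr rfl fun j _ => ?_
        rw [hrepr j]
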